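/- arXiv:2306.02047 — 4 statements merged into one kernel-verified Lean document; each statement's English description precedes it below -/
import Mathlib

section
/- Let H ∈ (1/2,1), T>0, n ∈ ℕ, and f ∈ L²([0,T];ℝⁿ). Then H(2H−1) ∫_0^T ∫_0^T |t−s|^{2H−2} ⟨f(s), f(t)⟩ ds dt ≤ 2H T^{2H−1} ∫_0^T |f(t)|² dt, where ⟨·,·⟩ and |·| denote the Euclidean inner product and norm on ℝⁿ. -/
open MeasureTheory Set

section Aux

/-- Left piece: integrability and value of `∫ s in c..t, |t-s|^a`. -/
lemma cm_pieceL {a t c : ℝ} (ha : -1 < a) (ha0 : a < 0) (h : c ≤ t) :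
    IntervalIntegrable (fun s => |t - s| ^ a) volume c t ∧
      ∫ s in c..t, |t - s| ^ a = (t - c) ^ (a + 1) / (a + 1) := by
  have heq : EqOn (fun s => (t - s) ^ a) (fun s => |t - s| ^ a) (uIcc c t) := by
    intro s hs
    rw [uIcc_of_le h] at hs
    simp only
    rw [abs_of_nonneg (by linarith [hs.2] : (0:ℝ) ≤ t - s)]
  have hii : IntervalIntegrable (fun s => (t - s) ^ a) volume c t := by
    have h2 := (intervalIntegral.intervalIntegrable_rpow' (a := t - t) (b := t - c) ha).comp_sub_left t
    simpa using h2.symm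
  have hii' : IntervalIntegrable (fun s => |t - s| ^ a) volume c t := by
    refine hii.congr ?_
    intro s hs
    exact heq (uIoc_subset_uIcc hs)
  refine ⟨hii', ?_⟩
  rw [← intervalIntegral.integral_congr heq]
  have h3 := intervalIntegral.integral_comp_sub_left (a := c) (b := t)
    (fun x => x ^ a) t
  rw [h3, sub_self, integral_rpow (Or.inl ha),
    Real.zero_rpow (by linarith : a + 1 ≠ 0), sub_zero]

/-- Right piece: integrability and value of `∫ s in t..d, |t-s|^a`. -/
lemma cm_pieceR {a t d : ℝ} (ha : -1 < a) (ha0 : a < 0) (h : t ≤ d) :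
    IntervalIntegrable (fun s => |t - s| ^ a) volume t d ∧
      ∫ s in t..d, |t - s| ^ a = (d - t) ^ (a + 1) / (a + 1) := by
  have heq : EqOn (fun s => (s - t) ^ a) (fun s => |t - s| ^ a) (uIcc t d) := by
    intro s hs
    rw [uIcc_of_le h] at hs
    simp only
    rw [abs_sub_comm, abs_of_nonneg (by linarith [hs.1] : (0:ℝ) ≤ s - t)]
  have hii : IntervalIntegrable (fun s => (s - t) ^ a) volume t d := by
    have h2 := (intervalIntegral.intervalIntegrable_rpow' (a := t - t) (b := d - t) ha).comp_sub_right t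
    simpa using h2
  have hii' : IntervalIntegrable (fun s => |t - s| ^ a) volume t d := by
    refine hii.congr ?_
    intro s hs
    exact heq (uIoc_subset_uIcc hs)
  refine ⟨hii', ?_⟩
  rw [← intervalIntegral.integral_congr heq]
  have h3 := intervalIntegral.integral_comp_sub_right (a := t) (b := d)
    (fun x => x ^ a) t
  rw [h3, sub_self, integral_rpow (Or.inl ha),
    Real.zero_rpow (by linarith : a + 1 ≠ 0), sub_zero]

/-- Kernel estimate: the kernel `s ↦ |t-s|^a` is integrable on `(0,T]` and its
integral is at most `2 T^(a+1) / (a+1)`. -/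
lemma cm_kernel {a T t : ℝ} (ha : -1 < a) (ha0 : a < 0) (ht : t ∈ Icc (0:ℝ) T) :
    IntegrableOn (fun s => |t - s| ^ a) (Ioc (0:ℝ) T) volume ∧
      ∫ s in Ioc (0:ℝ) T, |t - s| ^ a ≤ 2 * T ^ (a + 1) / (a + 1) := by
  obtain ⟨hL, hLval⟩ := cm_pieceL (c := 0) ha ha0 ht.1
  obtain ⟨hR, hRval⟩ := cm_pieceR (d := T) ha ha0 ht.2
  have hT0 : (0:ℝ) ≤ T := le_trans ht.1 ht.2
  have hII : IntervalIntegrable (fun s => |t - s| ^ a) volume 0 T := hL.trans hR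
  have hint : IntegrableOn (fun s => |t - s| ^ a) (Ioc (0:ℝ) T) volume :=
    (intervalIntegrable_iff_integrableOn_Ioc_of_le hT0).1 hII
  refine ⟨hint, ?_⟩
  have hsplit := intervalIntegral.integral_add_adjacent_intervals hL hR
  have hval : ∫ s in Ioc (0:ℝ) T, |t - s| ^ a
      = t ^ (a + 1) / (a + 1) + (T - t) ^ (a + 1) / (a + 1) := by
    rw [← intervalIntegral.integral_of_le hT0, ← hsplit, hLval, hRval, sub_zero]
  rw [hval]
  have h1 : t ^ (a + 1) ≤ T ^ (a + 1) :=
    Real.rpow_le_rpow ht.1 ht.2 (by linarith)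
  have h2 : (T - t) ^ (a + 1) ≤ T ^ (a + 1) :=
    Real.rpow_le_rpow (by linarith [ht.2]) (by linarith [ht.1]) (by linarith)
  have hpos : (0:ℝ) < a + 1 := by linarith
  rw [← add_div]
  have h2T : (0:ℝ) ≤ 2 * T ^ (a + 1) := by
    have := Real.rpow_nonneg hT0 (a + 1); linarith
  exact div_le_div₀ h2T (by linarith) hpos le_rfl

end Aux

set_option maxHeartbeats 1000000 in
/-- The Cameron–Martin norm of fractional Brownian motion with Hurst index `H ∈ (1/2,1)` is
dominated by the `L²` norm: for `f ∈ L²([0,T];ℝⁿ)`,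
`H(2H−1) ∫₀ᵀ ∫₀ᵀ |t−s|^{2H−2} ⟨f(s),f(t)⟩ ds dt ≤ 2H T^{2H−1} ∫₀ᵀ |f(t)|² dt`. -/
theorem cameronMartin_norm_le_L2
    (H T : ℝ) (n : ℕ) (hH : 1 / 2 < H) (hH1 : H < 1) (hT : 0 < T)
    (f : ℝ → EuclideanSpace ℝ (Fin n))
    (hf : MemLp f 2 (volume.restrict (Ioc (0:ℝ) T))) :
    H * (2 * H - 1) *
        ∫ t in Ioc (0:ℝ) T, ∫ s in Ioc (0:ℝ) T,
          |t - s| ^ (2 * H - 2) * (inner ℝ (f s) (f t) : ℝ)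
      ≤ 2 * H * T ^ (2 * H - 1) * ∫ t in Ioc (0:ℝ) T, ‖f t‖ ^ 2 := by
  set μ := volume.restrict (Ioc (0:ℝ) T) with hμ
  have ha : (-1:ℝ) < 2 * H - 2 := by linarith
  have ha0 : 2 * H - 2 < 0 := by linarith
  have hA : 2 * H - 2 + 1 = 2 * H - 1 := by ring
  set B : ℝ := 2 * T ^ (2 * H - 1) / (2 * H - 1) with hBdef
  have hker' : ∀ s ∈ Icc (0:ℝ) T,
      Integrable (fun t => |t - s| ^ (2 * H - 2)) μ ∧
        ∫ t, |t - s| ^ (2 * H - 2) ∂μ ≤ B := by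
    intro s hs
    obtain ⟨h1, h2⟩ := cm_kernel (T := T) ha ha0 hs
    rw [hA] at h2
    have hsymm : (fun t => |t - s| ^ (2 * H - 2)) = fun t => |s - t| ^ (2 * H - 2) := by
      funext t; rw [abs_sub_comm]
    rw [hsymm]
    exact ⟨h1, h2⟩
  have hae : ∀ᵐ s ∂μ, s ∈ Ioc (0:ℝ) T := ae_restrict_mem measurableSet_Ioc
  have hfm : AEStronglyMeasurable f μ := hf.1
  have hφ : Integrable (fun t => ‖f t‖ ^ 2) μ := (memLp_two_iff_integrable_sq_norm hfm).1 hf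
  have hφm : AEStronglyMeasurable (fun t => ‖f t‖ ^ 2) μ := hφ.1
  have hKm : Measurable (fun p : ℝ × ℝ => |p.1 - p.2| ^ (2 * H - 2)) :=
    (measurable_fst.sub measurable_snd).abs.pow measurable_const
  set g : ℝ × ℝ → ℝ := fun p => |p.1 - p.2| ^ (2 * H - 2) * ‖f p.2‖ ^ 2 with hgdef
  set g' : ℝ × ℝ → ℝ := fun p => |p.1 - p.2| ^ (2 * H - 2) * ‖f p.1‖ ^ 2 with hg'def
  set Φ : ℝ × ℝ → ℝ := fun p => |p.1 - p.2| ^ (2 * H - 2) * (inner ℝ (f p.2) (f p.1) : ℝ)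
    with hΦdef
  have hgm : AEStronglyMeasurable g (μ.prod μ) :=
    hKm.aestronglyMeasurable.mul hφm.comp_snd
  have hg'm : AEStronglyMeasurable g' (μ.prod μ) :=
    hKm.aestronglyMeasurable.mul hφm.comp_fst
  have hΦm : AEStronglyMeasurable Φ (μ.prod μ) :=
    hKm.aestronglyMeasurable.mul (hfm.comp_snd.inner hfm.comp_fst)
  -- integrability of g
  have hg : Integrable g (μ.prod μ) := by
    rw [integrable_prod_iff' hgm]
    constructor
    · filter_upwards [hae] with s hs
      simp only [hgdef]
      exact ((hker' s (Ioc_subset_Icc_self hs)).1).mul_const _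
    · have hAESM : AEStronglyMeasurable (fun s => ∫ t, ‖g (t, s)‖ ∂μ) μ := by
        have h1 := (hgm.norm.prod_swap).integral_prod_right'
        simpa using h1
      refine Integrable.mono (hφ.const_mul B) hAESM ?_
      filter_upwards [hae] with s hs
      obtain ⟨h1, h2⟩ := hker' s (Ioc_subset_Icc_self hs)
      have hnn : 0 ≤ ∫ t, ‖g (t, s)‖ ∂μ := integral_nonneg fun t => norm_nonneg _
      rw [Real.norm_of_nonneg hnn]
      have heq : ∫ t, ‖g (t, s)‖ ∂μ = (∫ t, |t - s| ^ (2 * H - 2) ∂μ) * ‖f s‖ ^ 2 := by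
        rw [← integral_mul_const]
        congr 1
        funext t
        simp only [hgdef]
        exact Real.norm_of_nonneg
          (mul_nonneg (Real.rpow_nonneg (abs_nonneg _) _) (sq_nonneg _))
      rw [heq]
      calc (∫ t, |t - s| ^ (2 * H - 2) ∂μ) * ‖f s‖ ^ 2
          ≤ B * ‖f s‖ ^ 2 := mul_le_mul_of_nonneg_right h2 (sq_nonneg _)
        _ ≤ ‖B * ‖f s‖ ^ 2‖ := Real.le_norm_self _
  have hswfun : g ∘ Prod.swap = g' := by
    funext p
    simp only [hgdef, hg'def, Function.comp_apply, Prod.fst_swap, Prod.snd_swap]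
    rw [abs_sub_comm]
  have hg' : Integrable g' (μ.prod μ) := by
    have hsw := hg.swap
    rwa [hswfun] at hsw
  have hbd : Integrable (fun p => (g p + g' p) / 2) (μ.prod μ) := (hg.add hg').div_const 2
  have hkey : ∀ p : ℝ × ℝ, |Φ p| ≤ (g p + g' p) / 2 := by
    intro p
    have hK0 : 0 ≤ |p.1 - p.2| ^ (2 * H - 2) := Real.rpow_nonneg (abs_nonneg _) _
    have hinner : |(inner ℝ (f p.2) (f p.1) : ℝ)| ≤ ‖f p.2‖ * ‖f p.1‖ :=
      abs_real_inner_le_norm _ _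
    have hamgm : ‖f p.2‖ * ‖f p.1‖ ≤ (‖f p.2‖ ^ 2 + ‖f p.1‖ ^ 2) / 2 := by
      nlinarith [sq_nonneg (‖f p.2‖ - ‖f p.1‖)]
    have h1 : |Φ p| = |p.1 - p.2| ^ (2 * H - 2) * |(inner ℝ (f p.2) (f p.1) : ℝ)| := by
      rw [hΦdef]; simp only
      rw [abs_mul, abs_of_nonneg hK0]
    rw [h1, hgdef, hg'def]
    simp only
    calc |p.1 - p.2| ^ (2 * H - 2) * |(inner ℝ (f p.2) (f p.1) : ℝ)|
        ≤ |p.1 - p.2| ^ (2 * H - 2) * ((‖f p.2‖ ^ 2 + ‖f p.1‖ ^ 2) / 2) :=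
          mul_le_mul_of_nonneg_left (le_trans hinner hamgm) hK0
      _ = (|p.1 - p.2| ^ (2 * H - 2) * ‖f p.2‖ ^ 2
            + |p.1 - p.2| ^ (2 * H - 2) * ‖f p.1‖ ^ 2) / 2 := by ring
  have hΦ : Integrable Φ (μ.prod μ) := by
    refine Integrable.mono hbd hΦm ?_
    refine Filter.Eventually.of_forall fun p => ?_
    calc ‖Φ p‖ = |Φ p| := rfl
      _ ≤ (g p + g' p) / 2 := hkey p
      _ ≤ ‖(g p + g' p) / 2‖ := Real.le_norm_self _
  -- chain of (in)equalities
  have hD : ∫ t, (∫ s, Φ (t, s) ∂μ) ∂μ = ∫ p, Φ p ∂(μ.prod μ) :=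
    integral_integral (f := fun t s => Φ (t, s)) hΦ
  have hΦle : ∫ p, Φ p ∂(μ.prod μ) ≤ ∫ p, (g p + g' p) / 2 ∂(μ.prod μ) :=
    integral_mono hΦ hbd fun p => le_trans (le_abs_self _) (hkey p)
  have hswapint : ∫ p, g' p ∂(μ.prod μ) = ∫ p, g p ∂(μ.prod μ) := by
    rw [← hswfun]
    exact integral_prod_swap g
  have hmean : ∫ p, (g p + g' p) / 2 ∂(μ.prod μ) = ∫ p, g p ∂(μ.prod μ) := by
    rw [integral_div, integral_add hg hg', hswapint]
    ring
  have hgval : ∫ p, g p ∂(μ.prod μ)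
      = ∫ s, (∫ t, |t - s| ^ (2 * H - 2) ∂μ) * ‖f s‖ ^ 2 ∂μ := by
    have h1 := integral_integral (f := fun s t => g (t, s)) hg.swap
    beta_reduce at h1
    have h2 : ∫ z : ℝ × ℝ, g (z.2, z.1) ∂(μ.prod μ) = ∫ p, g p ∂(μ.prod μ) := by
      have h3 := integral_prod_swap (μ := μ) (ν := μ) g
      simpa [Prod.swap] using h3
    rw [← h2, ← h1]
    congr 1
    funext s
    simp only [hgdef]
    rw [integral_mul_const]
  have hint1 : Integrable (fun s => (∫ t, |t - s| ^ (2 * H - 2) ∂μ) * ‖f s‖ ^ 2) μ := by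
    have h1 := hg.swap.integral_prod_left
    have h2 : (fun s => ∫ t, (g ∘ Prod.swap) (s, t) ∂μ)
        = fun s => (∫ t, |t - s| ^ (2 * H - 2) ∂μ) * ‖f s‖ ^ 2 := by
      funext s
      simp only [Function.comp_apply, Prod.swap_prod_mk, hgdef]
      rw [integral_mul_const]
    rwa [h2] at h1
  have hfinal : ∫ s, (∫ t, |t - s| ^ (2 * H - 2) ∂μ) * ‖f s‖ ^ 2 ∂μ
      ≤ B * ∫ s, ‖f s‖ ^ 2 ∂μ := by
    rw [← integral_const_mul]
    refine integral_mono_ae hint1 (hφ.const_mul B) ?_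
    filter_upwards [hae] with s hs
    exact mul_le_mul_of_nonneg_right (hker' s (Ioc_subset_Icc_self hs)).2 (sq_nonneg _)
  have hchain : ∫ t, (∫ s, Φ (t, s) ∂μ) ∂μ ≤ B * ∫ s, ‖f s‖ ^ 2 ∂μ := by
    rw [hD]
    calc ∫ p, Φ p ∂(μ.prod μ) ≤ ∫ p, (g p + g' p) / 2 ∂(μ.prod μ) := hΦle
      _ = ∫ p, g p ∂(μ.prod μ) := hmean
      _ = ∫ s, (∫ t, |t - s| ^ (2 * H - 2) ∂μ) * ‖f s‖ ^ 2 ∂μ := hgval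
      _ ≤ B * ∫ s, ‖f s‖ ^ 2 ∂μ := hfinal
  have hHpos : (0:ℝ) < H * (2 * H - 1) := by nlinarith
  have hgoal : H * (2 * H - 1) * ∫ t, (∫ s, Φ (t, s) ∂μ) ∂μ
      ≤ H * (2 * H - 1) * (B * ∫ s, ‖f s‖ ^ 2 ∂μ) :=
    mul_le_mul_of_nonneg_left hchain hHpos.le
  have hconst : H * (2 * H - 1) * (B * ∫ s, ‖f s‖ ^ 2 ∂μ)
      = 2 * H * T ^ (2 * H - 1) * ∫ s, ‖f s‖ ^ 2 ∂μ := by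
    rw [hBdef]
    have h21 : 2 * H - 1 ≠ 0 := by linarith
    rw [div_eq_mul_inv]
    linear_combination (2 * H * T ^ (2 * H - 1) * ∫ s, ‖f s‖ ^ 2 ∂μ) * mul_inv_cancel₀ h21
  rw [hconst] at hgoal
  exact hgoal
end

section
/- Let H ∈ (1/2,1), T>0, n ∈ ℕ and û ∈ L²([0,T];ℝⁿ), and define u(t) = ∫_0^t K_H(t,s) û(s) ds for t ∈ [0,T]. Then u is absolutely continuous on [0,T] and for almost every t ∈ [0,T] its derivative is given by u′(t) = C_H t^{H−1/2} ∫_0^t (t−s)^{H−3/2} s^{1/2−H} û(s) ds; equivalently, u(t) = ∫_0^t (K̇_H û)(r) dr for all t ∈ [0,T]. -/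
open MeasureTheory Set

/-- The Beta function, `B(a,b) = Γ(a)Γ(b)/Γ(a+b)`. -/
noncomputable def realBeta (a b : ℝ) : ℝ :=
  Real.Gamma a * Real.Gamma b / Real.Gamma (a + b)

/-- The normalizing constant `C_H = √(H(2H−1)/B(2−2H, H−1/2))`. -/
noncomputable def CH (H : ℝ) : ℝ :=
  Real.sqrt (H * (2 * H - 1) / realBeta (2 - 2 * H) (H - 1 / 2))

/-- The kernel `K_H(t,s) = C_H s^{1/2−H} ∫_s^t (u−s)^{H−3/2} u^{H−1/2} du` for `s < t`,
and `K_H(t,s) = 0` for `s ≥ t`. -/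
noncomputable def KH (H t s : ℝ) : ℝ :=
  if s < t then
    CH H * s ^ ((1:ℝ) / 2 - H) * ∫ u in s..t, (u - s) ^ (H - 3 / 2) * u ^ (H - 1 / 2)
  else 0

/-- The "derivative" `K̇_H` of the operator `K_H`:
`(K̇_H f)(t) = C_H t^{H−1/2} ∫_0^t (t−s)^{H−3/2} s^{1/2−H} f(s) ds`. -/
noncomputable def dotKH {n : ℕ} (H : ℝ) (f : ℝ → EuclideanSpace ℝ (Fin n)) (t : ℝ) :
    EuclideanSpace ℝ (Fin n) :=
  (CH H * t ^ (H - 1 / 2)) • ∫ s in (0:ℝ)..t, ((t - s) ^ (H - 3 / 2) * s ^ ((1:ℝ) / 2 - H)) • f s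

open Filter Metric Topology
open scoped ENNReal NNReal

lemma CH_nonneg (H : ℝ) : 0 ≤ CH H := Real.sqrt_nonneg _

/-- Lebesgue differentiation: the primitive of an integrable function on `ℝ` has derivative
equal to the function almost everywhere. -/
lemma ae_hasDerivAt_primitive {E : Type*} [NormedAddCommGroup E] [NormedSpace ℝ E]
    [CompleteSpace E] (g : ℝ → E) (hg : Integrable g volume) :
    ∀ᵐ x ∂(volume : Measure ℝ), HasDerivAt (fun y => ∫ r in (0:ℝ)..y, g r) (g x) x := by
  have hloc : LocallyIntegrable g volume := hg.locallyIntegrable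
  filter_upwards [IsUnifLocDoublingMeasure.ae_tendsto_average_norm_sub volume hloc 1] with x hx
  have hii : ∀ a b : ℝ, IntervalIntegrable g volume a b := fun a b => hg.intervalIntegrable
  rw [hasDerivAt_iff_tendsto_slope]
  have hδ : Tendsto (fun y : ℝ => |y - x|) (𝓝[≠] x) (𝓝[>] 0) := by
    rw [tendsto_nhdsWithin_iff]
    constructor
    · have : Tendsto (fun y : ℝ => |y - x|) (𝓝 x) (𝓝 |x - x|) :=
        ((continuous_id.sub continuous_const).abs).tendsto x
      simpa using this.mono_left nhdsWithin_le_nhds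
    · filter_upwards [eventually_mem_nhdsWithin] with y (hy : y ≠ x)
      exact mem_Ioi.2 (abs_pos.2 (sub_ne_zero.2 hy))
  have hmem : ∀ᶠ y in 𝓝[≠] x, x ∈ closedBall x (1 * |y - x|) := by
    filter_upwards with y
    exact mem_closedBall_self (by positivity)
  have key := hx (fun _ : ℝ => x) (fun y : ℝ => |y - x|) hδ hmem
  rw [tendsto_iff_norm_sub_tendsto_zero]
  apply squeeze_zero' (Eventually.of_forall fun y => norm_nonneg _)
    (g := fun y => 2 * ⨍ z in closedBall x |y - x|, ‖g z - g x‖)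
  · filter_upwards [eventually_mem_nhdsWithin] with y (hy : y ≠ x)
    have hyx : y - x ≠ 0 := sub_ne_zero.2 hy
    have habs : (0:ℝ) < |y - x| := abs_pos.2 hyx
    have h1 : (∫ r in (0:ℝ)..y, g r) - ∫ r in (0:ℝ)..x, g r = ∫ r in x..y, g r :=
      intervalIntegral.integral_interval_sub_left (hii 0 y) (hii 0 x)
    have h2 : (∫ r in x..y, g r) - (y - x) • g x = ∫ r in x..y, (g r - g x) := by
      rw [intervalIntegral.integral_sub (hii x y) (intervalIntegrable_const),
        intervalIntegral.integral_const]
    have hslope : slope (fun y => ∫ r in (0:ℝ)..y, g r) x y - g x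
        = (y - x)⁻¹ • (∫ r in x..y, (g r - g x)) := by
      rw [slope_def_module, h1, ← h2, smul_sub, smul_smul, inv_mul_cancel₀ hyx, one_smul]
    rw [hslope, norm_smul, norm_inv, Real.norm_eq_abs]
    have hsub : uIoc x y ⊆ closedBall x |y - x| := by
      intro z hz
      have hz' : z ∈ uIcc x y := uIoc_subset_uIcc hz
      have := Real.dist_le_of_mem_uIcc hz' (left_mem_uIcc (a := x) (b := y))
      rw [mem_closedBall]
      calc dist z x ≤ dist x y := this
        _ = |y - x| := by rw [Real.dist_eq, abs_sub_comm]
    have hint : IntegrableOn (fun z => ‖g z - g x‖) (closedBall x |y - x|) volume := by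
      refine (Integrable.sub hg.integrableOn ?_).norm
      exact integrableOn_const measure_closedBall_lt_top.ne
    have h3 : ‖∫ r in x..y, (g r - g x)‖ ≤ ∫ z in closedBall x |y - x|, ‖g z - g x‖ := by
      refine (intervalIntegral.norm_integral_le_integral_norm_uIoc).trans ?_
      refine setIntegral_mono_set hint (Eventually.of_forall fun z => norm_nonneg _)
        (HasSubset.Subset.eventuallyLE hsub)
    have h4 : (∫ z in closedBall x |y - x|, ‖g z - g x‖)
        = (2 * |y - x|) * ⨍ z in closedBall x |y - x|, ‖g z - g x‖ := by
      rw [setAverage_eq, smul_eq_mul, Real.volume_real_closedBall (abs_nonneg _)]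
      field_simp
    calc |y - x|⁻¹ * ‖∫ r in x..y, (g r - g x)‖
        ≤ |y - x|⁻¹ * ((2 * |y - x|) * ⨍ z in closedBall x |y - x|, ‖g z - g x‖) := by
          rw [← h4]; exact mul_le_mul_of_nonneg_left h3 (by positivity)
      _ = 2 * ⨍ z in closedBall x |y - x|, ‖g z - g x‖ := by field_simp
  · simpa using key.const_mul 2

/-- The key Fubini identity. -/
lemma fubini_key {n : ℕ} (H t : ℝ) (hH : 1 / 2 < H) (hH1 : H < 1) (ht : 0 < t)
    (w : ℝ → EuclideanSpace ℝ (Fin n)) (hwm : StronglyMeasurable w)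
    (hw2 : MemLp w 2 (volume.restrict (Ioo (0:ℝ) t))) :
    IntegrableOn (fun r => dotKH H w r) (Ioo (0:ℝ) t) volume ∧
      ∫ s in Ioo (0:ℝ) t, KH H t s • w s = ∫ r in Ioo (0:ℝ) t, dotKH H w r := by
  have ha : (0:ℝ) < H - 1 / 2 := by linarith
  have hb : (-1:ℝ) < H - 3 / 2 := by linarith
  have he2 : (-1:ℝ) < 2 * ((1:ℝ) / 2 - H) := by linarith
  set F : ℝ → ℝ → EuclideanSpace ℝ (Fin n) := fun r s =>
    if 0 < s ∧ s < r ∧ r < t then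
      (CH H * r ^ (H - 1 / 2) * ((r - s) ^ (H - 3 / 2) * s ^ ((1:ℝ) / 2 - H))) • w s
    else 0 with hF
  have hCH : 0 ≤ CH H := CH_nonneg H
  -- fun_prop
  have hsc : Measurable fun p : ℝ × ℝ =>
      CH H * p.1 ^ (H - 1 / 2) * ((p.1 - p.2) ^ (H - 3 / 2) * p.2 ^ ((1:ℝ) / 2 - H)) := by
    fun_prop
  have hset : MeasurableSet {p : ℝ × ℝ | 0 < p.2 ∧ p.2 < p.1 ∧ p.1 < t} :=
    (measurableSet_lt measurable_const measurable_snd).inter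
      ((measurableSet_lt measurable_snd measurable_fst).inter
        (measurableSet_lt measurable_fst measurable_const))
  have hFsm : StronglyMeasurable (Function.uncurry F) := by
    have heq : Function.uncurry F = fun p : ℝ × ℝ =>
        Set.indicator {p : ℝ × ℝ | 0 < p.2 ∧ p.2 < p.1 ∧ p.1 < t}
          (fun p => (CH H * p.1 ^ (H - 1 / 2) *
            ((p.1 - p.2) ^ (H - 3 / 2) * p.2 ^ ((1:ℝ) / 2 - H))) • w p.2) p := by
      funext p
      by_cases h : 0 < p.2 ∧ p.2 < p.1 ∧ p.1 < t
      · simp [Function.uncurry, hF, h]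
      · simp [Function.uncurry, hF, h]
    rw [heq]
    exact ((hsc.stronglyMeasurable).smul (hwm.comp_measurable measurable_snd)).indicator hset
  -- sections
  have hsec : ∀ s ∈ Ioo (0:ℝ) t, (fun r => F r s) = Set.indicator (Ioo s t)
      (fun r => (CH H * r ^ (H - 1 / 2) *
        ((r - s) ^ (H - 3 / 2) * s ^ ((1:ℝ) / 2 - H))) • w s) := by
    intro s hs
    funext r
    rw [Set.indicator_apply, hF]
    simp only [mem_Ioo]
    by_cases h : s < r ∧ r < t
    · rw [if_pos ⟨hs.1, h.1, h.2⟩, if_pos h]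
    · rw [if_neg fun hc => h ⟨hc.2.1, hc.2.2⟩, if_neg h]
  have hsec0 : ∀ s, s ∉ Ioo (0:ℝ) t → ∀ r, F r s = 0 := by
    intro s hs r
    rw [hF]
    exact if_neg fun hc => hs ⟨hc.1, hc.2.1.trans hc.2.2⟩
  have hsecr : ∀ r ∈ Ioo (0:ℝ) t, (fun s => F r s) = Set.indicator (Ioo (0:ℝ) r)
      (fun s => (CH H * r ^ (H - 1 / 2) *
        ((r - s) ^ (H - 3 / 2) * s ^ ((1:ℝ) / 2 - H))) • w s) := by
    intro r hr
    funext s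
    rw [Set.indicator_apply, hF]
    simp only [mem_Ioo]
    by_cases h : 0 < s ∧ s < r
    · rw [if_pos ⟨h.1, h.2, hr.2⟩, if_pos h]
    · rw [if_neg fun hc => h ⟨hc.1, hc.2.1⟩, if_neg h]
  have hsecr0 : ∀ r, r ∉ Ioo (0:ℝ) t → ∀ s, F r s = 0 := by
    intro r hr s
    rw [hF]
    exact if_neg fun hc => hr ⟨hc.1.trans hc.2.1, hc.2.2⟩
  -- kernel integrability in `r`
  have hker : ∀ s : ℝ, IntegrableOn (fun r => (r - s) ^ (H - 3 / 2)) (Ioo s t) volume := by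
    intro s
    have h1 : IntervalIntegrable (fun x : ℝ => x ^ (H - 3 / 2)) volume 0 (t - s) :=
      intervalIntegral.intervalIntegrable_rpow' hb
    have h2 := h1.comp_sub_right s
    simp only [zero_add, sub_add_cancel] at h2
    exact (h2.1).mono_set Ioo_subset_Ioc_self
  -- pointwise bound for sections in `r`
  have hb0 : ∀ s ∈ Ioo (0:ℝ) t, ∀ r ∈ Ioo s t,
      ‖(CH H * r ^ (H - 1 / 2) * ((r - s) ^ (H - 3 / 2) * s ^ ((1:ℝ) / 2 - H))) • w s‖
      ≤ (CH H * t ^ (H - 1 / 2) * s ^ ((1:ℝ) / 2 - H) * ‖w s‖) * (r - s) ^ (H - 3 / 2) := by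
    intro s hs r hr
    have hr0 : 0 < r := hs.1.trans hr.1
    have hrs : 0 < r - s := sub_pos.2 hr.1
    rw [norm_smul, Real.norm_eq_abs]
    rw [abs_of_nonneg (mul_nonneg (mul_nonneg hCH (Real.rpow_nonneg hr0.le _))
      (mul_nonneg (Real.rpow_nonneg hrs.le _) (Real.rpow_nonneg hs.1.le _)))]
    have hra : r ^ (H - 1 / 2) ≤ t ^ (H - 1 / 2) :=
      Real.rpow_le_rpow hr0.le hr.2.le ha.le
    calc CH H * r ^ (H - 1 / 2) * ((r - s) ^ (H - 3 / 2) * s ^ ((1:ℝ) / 2 - H)) * ‖w s‖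
        ≤ CH H * t ^ (H - 1 / 2) * ((r - s) ^ (H - 3 / 2) * s ^ ((1:ℝ) / 2 - H)) * ‖w s‖ := by
          have hnn : 0 ≤ (r - s) ^ (H - 3 / 2) * s ^ ((1:ℝ) / 2 - H) :=
            mul_nonneg (Real.rpow_nonneg hrs.le _) (Real.rpow_nonneg hs.1.le _)
          have := mul_le_mul_of_nonneg_right (mul_le_mul_of_nonneg_left hra hCH) hnn
          exact mul_le_mul_of_nonneg_right (by simpa [mul_assoc] using this) (norm_nonneg _)
      _ = (CH H * t ^ (H - 1 / 2) * s ^ ((1:ℝ) / 2 - H) * ‖w s‖) * (r - s) ^ (H - 3 / 2) := by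
          ring
  -- integrability of sections in `r`
  have hsecInt : ∀ s ∈ Ioo (0:ℝ) t, Integrable (fun r => F r s) volume := by
    intro s hs
    rw [hsec s hs, integrable_indicator_iff measurableSet_Ioo]
    refine Integrable.mono' (((hker s).const_mul
      (CH H * t ^ (H - 1 / 2) * s ^ ((1:ℝ) / 2 - H) * ‖w s‖))) ?_ ?_
    · refine ((Measurable.stronglyMeasurable ?_).smul_const (w s)).aestronglyMeasurable
      fun_prop
    · filter_upwards [ae_restrict_mem measurableSet_Ioo] with r hr using hb0 s hs r hr
  -- the elementary kernel integral
  have hkint : ∀ s ∈ Ioo (0:ℝ) t,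
      ∫ r in Ioo s t, (r - s) ^ (H - 3 / 2) = (t - s) ^ (H - 1 / 2) / (H - 1 / 2) := by
    intro s hs
    rw [← integral_Ioc_eq_integral_Ioo, ← intervalIntegral.integral_of_le hs.2.le]
    rw [show (fun r : ℝ => (r - s) ^ (H - 3 / 2)) = fun r : ℝ => ((r - s) ^ (H - 3 / 2)) from rfl]
    rw [intervalIntegral.integral_comp_sub_right (fun x : ℝ => x ^ (H - 3 / 2)) s]
    rw [integral_rpow (Or.inl hb)]
    rw [sub_self, Real.zero_rpow (by linarith : H - 3 / 2 + 1 ≠ 0)]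
    rw [show H - 3 / 2 + 1 = H - 1 / 2 by ring]
    ring
  -- bound for the norm integrals
  have hbound2 : ∀ s ∈ Ioo (0:ℝ) t, (∫ r, ‖F r s‖) ≤
      (CH H * t ^ (H - 1 / 2) * (t ^ (H - 1 / 2) / (H - 1 / 2))) *
        (s ^ ((1:ℝ) / 2 - H) * ‖w s‖) := by
    intro s hs
    have hnormint : (fun r => ‖F r s‖) = Set.indicator (Ioo s t)
        (fun r => ‖(CH H * r ^ (H - 1 / 2) *
          ((r - s) ^ (H - 3 / 2) * s ^ ((1:ℝ) / 2 - H))) • w s‖) := by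
      funext r
      rw [← norm_indicator_eq_indicator_norm]
      congr 1
      exact congrFun (hsec s hs) r
    rw [hnormint, integral_indicator measurableSet_Ioo]
    have hInt1 : IntegrableOn (fun r => ‖(CH H * r ^ (H - 1 / 2) *
        ((r - s) ^ (H - 3 / 2) * s ^ ((1:ℝ) / 2 - H))) • w s‖) (Ioo s t) volume := by
      have := (hsecInt s hs).norm
      rw [hnormint, integrable_indicator_iff measurableSet_Ioo] at this
      exact this
    have hInt2 : IntegrableOn (fun r =>
        (CH H * t ^ (H - 1 / 2) * s ^ ((1:ℝ) / 2 - H) * ‖w s‖) * (r - s) ^ (H - 3 / 2))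
        (Ioo s t) volume := (hker s).const_mul _
    calc (∫ r in Ioo s t, ‖(CH H * r ^ (H - 1 / 2) *
          ((r - s) ^ (H - 3 / 2) * s ^ ((1:ℝ) / 2 - H))) • w s‖)
        ≤ ∫ r in Ioo s t,
            (CH H * t ^ (H - 1 / 2) * s ^ ((1:ℝ) / 2 - H) * ‖w s‖) * (r - s) ^ (H - 3 / 2) :=
          setIntegral_mono_on hInt1 hInt2 measurableSet_Ioo (fun r hr => hb0 s hs r hr)
      _ = (CH H * t ^ (H - 1 / 2) * s ^ ((1:ℝ) / 2 - H) * ‖w s‖) *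
            ((t - s) ^ (H - 1 / 2) / (H - 1 / 2)) := by
          rw [integral_const_mul, hkint s hs]
      _ ≤ (CH H * t ^ (H - 1 / 2) * s ^ ((1:ℝ) / 2 - H) * ‖w s‖) *
            (t ^ (H - 1 / 2) / (H - 1 / 2)) := by
          have h1 : (t - s) ^ (H - 1 / 2) ≤ t ^ (H - 1 / 2) :=
            Real.rpow_le_rpow (by linarith [hs.2]) (by linarith [hs.1]) ha.le
          have h2 : 0 ≤ CH H * t ^ (H - 1 / 2) * s ^ ((1:ℝ) / 2 - H) * ‖w s‖ :=
            mul_nonneg (mul_nonneg (mul_nonneg hCH (Real.rpow_nonneg ht.le _))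
              (Real.rpow_nonneg hs.1.le _)) (norm_nonneg _)
          exact mul_le_mul_of_nonneg_left ((div_le_div_iff_of_pos_right ha).2 h1) h2
      _ = (CH H * t ^ (H - 1 / 2) * (t ^ (H - 1 / 2) / (H - 1 / 2))) *
            (s ^ ((1:ℝ) / 2 - H) * ‖w s‖) := by ring
  -- Hölder: the bound function is integrable
  have hMint : Integrable (fun s => Set.indicator (Ioo (0:ℝ) t)
      (fun s => (CH H * t ^ (H - 1 / 2) * (t ^ (H - 1 / 2) / (H - 1 / 2))) *
        (s ^ ((1:ℝ) / 2 - H) * ‖w s‖)) s) volume := by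
    rw [integrable_indicator_iff measurableSet_Ioo]
    apply Integrable.const_mul
    have hφ : MemLp (fun s : ℝ => s ^ ((1:ℝ) / 2 - H)) 2 (volume.restrict (Ioo (0:ℝ) t)) := by
      rw [memLp_two_iff_integrable_sq (by fun_prop : AEStronglyMeasurable
        (fun s : ℝ => s ^ ((1:ℝ) / 2 - H)) (volume.restrict (Ioo (0:ℝ) t)))]
      have hint : IntegrableOn (fun s : ℝ => s ^ (2 * ((1:ℝ) / 2 - H))) (Ioo (0:ℝ) t) volume :=
        ((intervalIntegral.intervalIntegrable_rpow' he2).1).mono_set Ioo_subset_Ioc_self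
      refine hint.congr ?_
      filter_upwards [ae_restrict_mem measurableSet_Ioo] with s hs
      rw [show (2:ℝ) * ((1:ℝ) / 2 - H) = ((1:ℝ) / 2 - H) * 2 by ring,
        Real.rpow_mul hs.1.le, Real.rpow_two]
    have hn : MemLp (fun s => ‖w s‖) 2 (volume.restrict (Ioo (0:ℝ) t)) := hw2.norm
    have hpqr : (1:ℝ≥0∞) / 1 = 1 / 2 + 1 / 2 := by
      rw [ENNReal.div_add_div_same, div_one]
      norm_num
      rw [ENNReal.div_self (by norm_num) (by norm_num)]
    have hmul := hn.smul hφ (r := 1)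
    rw [memLp_one_iff_integrable] at hmul
    refine hmul.congr ?_
    filter_upwards with s
    simp [Pi.smul_apply, smul_eq_mul]
  -- integrability on the product space
  have hFi : Integrable (Function.uncurry F) (volume.prod volume) := by
    rw [integrable_prod_iff' hFsm.aestronglyMeasurable]
    constructor
    · refine Eventually.of_forall fun s => ?_
      by_cases hs : s ∈ Ioo (0:ℝ) t
      · exact hsecInt s hs
      · have hz : (fun r => F r s) = fun _ => 0 := funext fun r => hsec0 s hs r
        show Integrable (fun r => F r s) volume
        rw [hz]
        exact integrable_zero _ _ _
    · refine Integrable.mono' hMint ?_ ?_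
      · exact (hFsm.norm.integral_prod_left').aestronglyMeasurable
      · refine Eventually.of_forall fun s => ?_
        by_cases hs : s ∈ Ioo (0:ℝ) t
        · rw [Set.indicator_of_mem hs, Real.norm_eq_abs,
            abs_of_nonneg (integral_nonneg fun r => norm_nonneg _)]
          exact hbound2 s hs
        · rw [Set.indicator_of_notMem hs]
          have hz : (fun r => ‖F r s‖) = fun _ => (0:ℝ) :=
            funext fun r => by rw [hsec0 s hs r, norm_zero]
          show ‖∫ r, ‖F r s‖‖ ≤ 0
          rw [hz]
          simp
  -- identification of the two iterated integrals
  have hL : (fun r => ∫ s, F r s) = Set.indicator (Ioo (0:ℝ) t) (fun r => dotKH H w r) := by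
    funext r
    by_cases hr : r ∈ Ioo (0:ℝ) t
    · rw [Set.indicator_of_mem hr, hsecr r hr, integral_indicator measurableSet_Ioo]
      rw [dotKH, intervalIntegral.integral_of_le hr.1.le, integral_Ioc_eq_integral_Ioo,
        ← integral_smul]
      refine setIntegral_congr_fun measurableSet_Ioo fun s hs => ?_
      rw [smul_smul]
    · rw [Set.indicator_of_notMem hr]
      have hz : (fun s => F r s) = fun _ => 0 := funext (hsecr0 r hr)
      rw [hz, integral_zero]
  have hR : (fun s => ∫ r, F r s) = Set.indicator (Ioo (0:ℝ) t)
      (fun s => KH H t s • w s) := by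
    funext s
    by_cases hs : s ∈ Ioo (0:ℝ) t
    · rw [Set.indicator_of_mem hs, hsec s hs, integral_indicator measurableSet_Ioo]
      rw [KH, if_pos hs.2, intervalIntegral.integral_of_le hs.2.le,
        integral_Ioc_eq_integral_Ioo, ← integral_const_mul, ← integral_smul_const]
      refine setIntegral_congr_fun measurableSet_Ioo fun r hr => ?_
      congr 1
      ring
    · rw [Set.indicator_of_notMem hs]
      have hz : (fun r => F r s) = fun _ => 0 := funext fun r => hsec0 s hs r
      rw [hz, integral_zero]
  constructor
  · have h1 : Integrable (fun r => ∫ s, F r s) volume := hFi.integral_prod_left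
    rw [hL, integrable_indicator_iff measurableSet_Ioo] at h1
    exact h1
  · have hswap : (∫ r, ∫ s, F r s) = ∫ s, ∫ r, F r s :=
      MeasureTheory.integral_integral_swap hFi
    calc ∫ s in Ioo (0:ℝ) t, KH H t s • w s
        = ∫ s, Set.indicator (Ioo (0:ℝ) t) (fun s => KH H t s • w s) s :=
          (integral_indicator measurableSet_Ioo).symm
      _ = ∫ s, ∫ r, F r s := by rw [← hR]
      _ = ∫ r, ∫ s, F r s := hswap.symm
      _ = ∫ r, Set.indicator (Ioo (0:ℝ) t) (fun r => dotKH H w r) r := by rw [← hL]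
      _ = ∫ r in Ioo (0:ℝ) t, dotKH H w r := integral_indicator measurableSet_Ioo

/-- Differentiability of elements of the Cameron–Martin space: if `u(t) = ∫_0^t K_H(t,s) uh(s) ds`
with `uh ∈ L²([0,T];ℝⁿ)`, then `u` is absolutely continuous on `[0,T]`, i.e.
`u(t) = ∫_0^t (K̇_H uh)(r) dr` for all `t ∈ [0,T]`, and for almost every `t`,
`u′(t) = (K̇_H uh)(t) = C_H t^{H−1/2} ∫_0^t (t−s)^{H−3/2} s^{1/2−H} uh(s) ds`. -/
theorem cameronMartin_differentiable
    (H T : ℝ) (n : ℕ) (hH : 1 / 2 < H) (hH1 : H < 1) (hT : 0 < T)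
    (uh : ℝ → EuclideanSpace ℝ (Fin n))
    (huh : MemLp uh 2 (volume.restrict (Ioc (0:ℝ) T)))
    (u : ℝ → EuclideanSpace ℝ (Fin n))
    (hu : ∀ t, u t = ∫ s in (0:ℝ)..t, KH H t s • uh s) :
    (∀ t ∈ Icc (0:ℝ) T, u t = ∫ r in (0:ℝ)..t, dotKH H uh r) ∧
    (∀ᵐ t ∂(volume.restrict (Ioo (0:ℝ) T)), HasDerivAt u (dotKH H uh t) t) := by
  set w := huh.1.mk uh with hwdef
  have hwm : StronglyMeasurable w := huh.1.stronglyMeasurable_mk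
  have hae : uh =ᵐ[volume.restrict (Ioc (0:ℝ) T)] w := huh.1.ae_eq_mk
  have hw2 : MemLp w 2 (volume.restrict (Ioc (0:ℝ) T)) := huh.ae_eq hae
  have hw2' : ∀ t : ℝ, 0 < t → t ≤ T → MemLp w 2 (volume.restrict (Ioo (0:ℝ) t)) := by
    intro t ht htT
    have hsub : Ioo (0:ℝ) t ⊆ Ioc (0:ℝ) T := fun x hx => ⟨hx.1, hx.2.le.trans htT⟩
    have := hw2.restrict (Ioo (0:ℝ) t)
    rwa [Measure.restrict_restrict measurableSet_Ioo,
      inter_eq_self_of_subset_left hsub] at this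
  have haes : ∀ t : ℝ, 0 < t → t ≤ T → uh =ᵐ[volume.restrict (Ioo (0:ℝ) t)] w := by
    intro t ht htT
    have hsub : Ioo (0:ℝ) t ⊆ Ioc (0:ℝ) T := fun x hx => ⟨hx.1, hx.2.le.trans htT⟩
    exact hae.filter_mono (ae_mono (Measure.restrict_mono hsub le_rfl))
  have hdot : ∀ r : ℝ, 0 < r → r ≤ T → dotKH H uh r = dotKH H w r := by
    intro r hr hrT
    have hsub : Ioc (0:ℝ) r ⊆ Ioc (0:ℝ) T := Ioc_subset_Ioc le_rfl hrT
    have h' : uh =ᵐ[volume.restrict (Ioc (0:ℝ) r)] w :=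
      hae.filter_mono (ae_mono (Measure.restrict_mono hsub le_rfl))
    unfold dotKH
    congr 1
    rw [intervalIntegral.integral_of_le hr.le, intervalIntegral.integral_of_le hr.le]
    apply integral_congr_ae
    filter_upwards [h'] with s hs
    rw [hs]
  have part1 : ∀ t ∈ Icc (0:ℝ) T, u t = ∫ r in (0:ℝ)..t, dotKH H uh r := by
    rintro t ⟨ht0, htT⟩
    rcases eq_or_lt_of_le ht0 with h0 | h0
    · rw [hu t, ← h0]
      simp
    · have hkey := fubini_key H t hH hH1 h0 w hwm (hw2' t h0 htT)
      have e1 : u t = ∫ s in Ioo (0:ℝ) t, KH H t s • w s := by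
        rw [hu t, intervalIntegral.integral_of_le h0.le, integral_Ioc_eq_integral_Ioo]
        apply integral_congr_ae
        filter_upwards [haes t h0 htT] with s hs
        rw [hs]
      have e2 : ∫ r in Ioo (0:ℝ) t, dotKH H w r = ∫ r in Ioo (0:ℝ) t, dotKH H uh r := by
        refine setIntegral_congr_fun measurableSet_Ioo fun r hr => ?_
        exact (hdot r hr.1 (hr.2.le.trans htT)).symm
      rw [e1, hkey.2, e2, intervalIntegral.integral_of_le h0.le, integral_Ioc_eq_integral_Ioo]
  refine ⟨part1, ?_⟩
  set g : ℝ → EuclideanSpace ℝ (Fin n) :=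
    Set.indicator (Ioo (0:ℝ) T) (fun r => dotKH H w r) with hg
  have hgi : Integrable g volume := by
    rw [hg, integrable_indicator_iff measurableSet_Ioo]
    exact (fubini_key H T hH hH1 hT w hwm (hw2' T hT le_rfl)).1
  have hd := ae_hasDerivAt_primitive g hgi
  filter_upwards [ae_restrict_mem measurableSet_Ioo, ae_restrict_of_ae hd] with x hx hdx
  have hgx : g x = dotKH H uh x := by
    rw [hg, Set.indicator_of_mem hx, ← hdot x hx.1 hx.2.le]
  have hupee : u =ᶠ[𝓝 x] fun y => ∫ r in (0:ℝ)..y, g r := by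
    filter_upwards [isOpen_Ioo.mem_nhds hx] with y hy
    have hy0 : (0:ℝ) ≤ y := hy.1.le
    rw [part1 y ⟨hy.1.le, hy.2.le⟩, intervalIntegral.integral_of_le hy0,
      intervalIntegral.integral_of_le hy0]
    refine setIntegral_congr_fun measurableSet_Ioc fun r hr => ?_
    have hrmem : r ∈ Ioo (0:ℝ) T := ⟨hr.1, lt_of_le_of_lt hr.2 hy.2⟩
    rw [hg, Set.indicator_of_mem hrmem]
    exact hdot r hr.1 hrmem.2.le
  have hfinal : HasDerivAt u (g x) x := hdx.congr_of_eventuallyEq hupee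
  rwa [hgx] at hfinal
end

section
/- Let a<b, 0<α<1, p>1 with α > 1/p, and f ∈ L^p(a,b). Then there is a constant C>0 depending only on α, p, a, b, and a function F that equals I^α_{a+}f almost everywhere on (a,b), such that |F(x) − F(y)| ≤ C ‖f‖_{L^p(a,b)} |x−y|^{α−1/p} for all x,y ∈ [a,b]; in particular I^α_{a+}f has a Hölder continuous version of exponent α − 1/p. -/
open MeasureTheory Set intervalIntegral
open scoped ENNReal

/-- Left-sided Riemann–Liouville fractional integral:
`I^α_{a+} f (x) = (1/Γ(α)) ∫_a^x (x-y)^(α-1) f(y) dy`. -/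
noncomputable def fracIntL (a α : ℝ) (f : ℝ → ℝ) (x : ℝ) : ℝ :=
  (1 / Real.Gamma α) * ∫ y in a..x, (x - y) ^ (α - 1) * f y

lemma aux_rpow_superadd {u v q : ℝ} (hu : 0 ≤ u) (hv : 0 ≤ v) (hq : 1 ≤ q) :
    u ^ q + v ^ q ≤ (u + v) ^ q := by
  have h := NNReal.add_rpow_le_rpow_add (Real.toNNReal u) (Real.toNNReal v) hq
  have h2 := NNReal.coe_le_coe.2 h
  push_cast [NNReal.coe_rpow, Real.coe_toNNReal u hu, Real.coe_toNNReal v hv,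
    Real.coe_toNNReal _ (add_nonneg hu hv)] at h2
  exact h2

lemma aux_kernel_intervalIntegrable' {s : ℝ} (hs : -1 < s) (z c d : ℝ) :
    IntervalIntegrable (fun t => (z - t) ^ s) volume c d := by
  have := ((intervalIntegral.intervalIntegrable_rpow' hs (a := z - c) (b := z - d)).comp_sub_left z)
  simpa using this

lemma aux_kernel_integral {s : ℝ} (hs : -1 < s) (z c d : ℝ) :
    ∫ t in c..d, (z - t) ^ s = ((z - c) ^ (s+1) - (z - d) ^ (s+1)) / (s+1) := by
  rw [intervalIntegral.integral_comp_sub_left (fun u => u ^ s) z, integral_rpow (Or.inl hs)]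

lemma aux_kernel_integralOn {s : ℝ} (hs : -1 < s) {z c d : ℝ} (hcd : c ≤ d) :
    ∫ t in Ioo c d, (z - t) ^ s = ((z - c) ^ (s+1) - (z - d) ^ (s+1)) / (s+1) := by
  rw [← integral_Ioc_eq_integral_Ioo, ← intervalIntegral.integral_of_le hcd,
    aux_kernel_integral hs z c d]

lemma aux_kernel_integrableOn {s : ℝ} (hs : -1 < s) {z c d : ℝ} (hcd : c ≤ d) :
    IntegrableOn (fun t => (z - t) ^ s) (Ioo c d) volume := by
  have h1 := aux_kernel_intervalIntegrable' hs z c d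
  rw [intervalIntegrable_iff_integrableOn_Ioc_of_le hcd] at h1
  exact h1.mono_set Ioo_subset_Ioc_self

lemma aux_kernel_memLp {s q : ℝ} (hq1 : 1 ≤ q) (hsq : -1 < s * q) {z c d : ℝ}
    (hcd : c ≤ d) (hdz : d ≤ z) :
    MemLp (fun t => (z - t) ^ s) (ENNReal.ofReal q) (volume.restrict (Ioo c d)) := by
  have hq0 : 0 < q := lt_of_lt_of_le zero_lt_one hq1
  have hne : ENNReal.ofReal q ≠ 0 := (ENNReal.ofReal_pos.2 hq0).ne'
  have hmeas : AEStronglyMeasurable (fun t : ℝ => (z - t) ^ s) (volume.restrict (Ioo c d)) := by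
    apply Measurable.aestronglyMeasurable; fun_prop
  have hint : Integrable (fun t => (z - t) ^ (s * q)) (volume.restrict (Ioo c d)) :=
    aux_kernel_integrableOn hsq hcd
  have heq : ∀ᵐ t ∂(volume.restrict (Ioo c d)), (z - t) ^ (s * q) = ‖(z - t) ^ s‖ ^ q := by
    filter_upwards [ae_restrict_mem measurableSet_Ioo] with t ht
    have h0 : (0:ℝ) ≤ z - t := by have := ht.2; linarith
    rw [Real.norm_eq_abs, abs_of_nonneg (Real.rpow_nonneg h0 s), ← Real.rpow_mul h0]
  have h2 : Integrable (fun t => ‖(z - t) ^ s‖ ^ q) (volume.restrict (Ioo c d)) :=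
    hint.congr heq
  have h3 : MemLp (fun t => ‖(z - t) ^ s‖ ^ q) 1 (volume.restrict (Ioo c d)) :=
    memLp_one_iff_integrable.2 h2
  refine (memLp_norm_rpow_iff hmeas hne ENNReal.ofReal_ne_top).1 ?_
  rw [ENNReal.toReal_ofReal hq0.le, ENNReal.div_self hne ENNReal.ofReal_ne_top]
  exact h3

lemma aux_prod_intervalIntegrable {p q : ℝ} (hqp : Real.HolderConjugate q p) {g K : ℝ → ℝ}
    {c d : ℝ} (hcd : c ≤ d)
    (hK : MemLp K (ENNReal.ofReal q) (volume.restrict (Ioo c d)))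
    (hg : MemLp g (ENNReal.ofReal p) (volume.restrict (Ioo c d))) :
    IntervalIntegrable (fun t => K t * g t) volume c d := by
  have hpqr : (1 : ℝ≥0∞) / 1 = 1 / ENNReal.ofReal q + 1 / ENNReal.ofReal p := by
    simp only [one_div, inv_one]
    exact hqp.inv_add_inv_ennreal.symm
  have hsmul : MemLp (K • g) 1 (volume.restrict (Ioo c d)) := by
    haveI : ENNReal.HolderTriple (ENNReal.ofReal q) (ENNReal.ofReal p) 1 :=
      ⟨by rw [inv_one]; simpa [one_div] using hpqr.symm⟩
    exact MemLp.smul hg hK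
  have hInt : Integrable (fun t => K t * g t) (volume.restrict (Ioo c d)) := by
    have := memLp_one_iff_integrable.1 hsmul
    exact this
  rw [intervalIntegrable_iff_integrableOn_Ioc_of_le hcd]
  exact IntegrableOn.congr_set_ae hInt (MeasureTheory.Ioo_ae_eq_Ioc).symm

lemma aux_holder_bound {p q : ℝ} (hqp : Real.HolderConjugate q p) {g K : ℝ → ℝ} {c d M Np : ℝ}
    (hcd : c ≤ d)
    (hK : MemLp K (ENNReal.ofReal q) (volume.restrict (Ioo c d)))
    (hg : MemLp g (ENNReal.ofReal p) (volume.restrict (Ioo c d)))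
    (hKnn : ∀ t ∈ Ioo c d, 0 ≤ K t)
    (hKM : ∫ t in Ioo c d, K t ^ q ≤ M)
    (hNp : (∫ t in Ioo c d, |g t| ^ p) ^ (1/p) ≤ Np) :
    |∫ t in c..d, K t * g t| ≤ M ^ (1/q) * Np := by
  have hp0 : 0 < p := hqp.symm.pos
  have hq0 : 0 < q := hqp.pos
  rw [intervalIntegral.integral_of_le hcd, integral_Ioc_eq_integral_Ioo]
  have h0 : |∫ t in Ioo c d, K t * g t| ≤ ∫ t in Ioo c d, ‖K t‖ * ‖g t‖ := by
    have := MeasureTheory.norm_integral_le_integral_norm (f := fun t => K t * g t)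
      (μ := volume.restrict (Ioo c d))
    simpa [Real.norm_eq_abs, abs_mul] using this
  have h1 := integral_mul_norm_le_Lp_mul_Lq hqp hK hg
  have hKq : ∫ t in Ioo c d, ‖K t‖ ^ q = ∫ t in Ioo c d, K t ^ q := by
    refine setIntegral_congr_fun measurableSet_Ioo fun t ht => ?_
    rw [Real.norm_eq_abs, abs_of_nonneg (hKnn t ht)]
  have hgp : ∫ t in Ioo c d, ‖g t‖ ^ p = ∫ t in Ioo c d, |g t| ^ p := by
    simp [Real.norm_eq_abs]
  have hM0 : 0 ≤ ∫ t in Ioo c d, K t ^ q :=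
    setIntegral_nonneg measurableSet_Ioo fun t ht => Real.rpow_nonneg (hKnn t ht) q
  have hg0 : 0 ≤ ∫ t in Ioo c d, |g t| ^ p :=
    setIntegral_nonneg measurableSet_Ioo fun t _ => Real.rpow_nonneg (abs_nonneg _) p
  have hNp0 : 0 ≤ (∫ t in Ioo c d, |g t| ^ p) ^ (1/p) := Real.rpow_nonneg hg0 _
  calc |∫ t in Ioo c d, K t * g t| ≤ ∫ t in Ioo c d, ‖K t‖ * ‖g t‖ := h0
    _ ≤ (∫ t in Ioo c d, ‖K t‖ ^ q) ^ (1/q) * (∫ t in Ioo c d, ‖g t‖ ^ p) ^ (1/p) := h1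
    _ ≤ M ^ (1/q) * Np := by
        rw [hKq, hgp]
        exact mul_le_mul (Real.rpow_le_rpow hM0 hKM (by positivity)) hNp hNp0
          (Real.rpow_nonneg (hM0.trans hKM) _)

/-- If `α > 1/p` then `I^α_{a+} f` has a Hölder continuous version of exponent `α − 1/p`:
there are `C > 0` (depending only on `α, p, a, b`) and, for each `f ∈ L^p(a,b)`, a function `F`
equal to `I^α_{a+} f` a.e. on `(a,b)` with
`|F(x) − F(y)| ≤ C ‖f‖_{L^p(a,b)} |x−y|^{α−1/p}` for all `x, y ∈ [a,b]`. -/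
theorem fracIntL_holder_version
    (a b α p : ℝ) (hab : a < b) (hα0 : 0 < α) (hα1 : α < 1) (hp : 1 < p)
    (hαp : 1 / p < α) :
    ∃ C : ℝ, 0 < C ∧ ∀ f : ℝ → ℝ,
      MemLp f (ENNReal.ofReal p) (volume.restrict (Ioo a b)) →
      ∃ F : ℝ → ℝ,
        (∀ᵐ x ∂(volume.restrict (Ioo a b)), F x = fracIntL a α f x) ∧
        ∀ x ∈ Icc a b, ∀ y ∈ Icc a b,
          |F x - F y| ≤
            C * (eLpNorm f (ENNReal.ofReal p) (volume.restrict (Ioo a b))).toReal *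
              |x - y| ^ (α - 1 / p) := by
  have hp0 : 0 < p := lt_trans one_pos hp
  have hpq : p.HolderConjugate (p / (p-1)) := Real.HolderConjugate.conjExponent hp
  set q : ℝ := p / (p - 1) with hqdef
  have hqp : q.HolderConjugate p := hpq.symm
  have hq0 : 0 < q := hqp.pos
  have hq1 : 1 ≤ q := hqp.lt.le
  have hinv : q⁻¹ + p⁻¹ = 1 := hqp.inv_add_inv_eq_one
  have hqq : q * q⁻¹ = 1 := mul_inv_cancel₀ hq0.ne'
  have hβpos : 0 < (α - 1) * q + 1 := by
    have h2 : p⁻¹ < α := by rwa [← one_div]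
    nlinarith [mul_pos hq0 (sub_pos.2 h2)]
  have hs : -1 < (α - 1) * q := by linarith
  have hβq : ((α - 1) * q + 1) * (1/q) = α - 1/p := by
    have h3 : (1:ℝ)/q = 1 - 1/p := by
      rw [one_div, one_div]; linarith
    calc ((α - 1) * q + 1) * (1/q) = (α-1) * (q * (1/q)) + 1/q := by ring
      _ = α - 1/p := by
          rw [mul_one_div_cancel hq0.ne', h3]; ring
  have hΓ : 0 < Real.Gamma α := Real.Gamma_pos_of_pos hα0
  have hCpos : 0 < 2 * (1 / Real.Gamma α) * (1/((α - 1) * q + 1)) ^ (1/q) := by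
    have := Real.rpow_pos_of_pos (show (0:ℝ) < 1/((α - 1) * q + 1) by positivity) (1/q)
    positivity
  refine ⟨2 * (1 / Real.Gamma α) * (1/((α - 1) * q + 1)) ^ (1/q), hCpos, ?_⟩
  intro f hf
  set μab := volume.restrict (Ioo a b) with hμab
  set g : ℝ → ℝ := hf.1.mk f with hgdef
  have hfg : f =ᵐ[μab] g := hf.1.ae_eq_mk
  have hg : MemLp g (ENNReal.ofReal p) μab := hf.ae_eq hfg
  have hfg' : ∀ᵐ t ∂(volume : Measure ℝ), t ∈ Ioo a b → f t = g t :=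
    (ae_restrict_iff' measurableSet_Ioo).1 hfg
  -- pointwise equality of the two fractional integrals on `Icc a b`
  have heqx : ∀ x ∈ Icc a b, fracIntL a α g x = fracIntL a α f x := by
    intro x hx
    unfold fracIntL
    congr 1
    rw [intervalIntegral.integral_of_le hx.1, intervalIntegral.integral_of_le hx.1]
    refine integral_congr_ae ?_
    have hnx : ∀ᵐ t ∂(volume : Measure ℝ), t ≠ x := by
      rw [ae_iff]
      simp only [not_not]
      have : {t : ℝ | t = x} = {x} := by ext t; simp
      rw [this]
      exact measure_singleton x
    have h1 : ∀ᵐ t ∂(volume.restrict (Ioc a x)),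
        ((t ∈ Ioo a b → f t = g t) ∧ t ≠ x) := ae_restrict_of_ae (hfg'.and hnx)
    filter_upwards [h1, ae_restrict_mem measurableSet_Ioc] with t ht htm
    have htx : t < x := lt_of_le_of_ne htm.2 ht.2
    have : f t = g t := ht.1 ⟨htm.1, lt_of_lt_of_le htx hx.2⟩
    rw [this]
  -- the Lp norm as a real number
  set N : ℝ := (eLpNorm f (ENNReal.ofReal p) μab).toReal with hN
  have hint_gp : IntegrableOn (fun t => |g t| ^ p) (Ioo a b) volume := by
    have h := hg.integrable_norm_rpow (ENNReal.ofReal_pos.2 hp0).ne' ENNReal.ofReal_ne_top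
    rw [ENNReal.toReal_ofReal hp0.le] at h
    simpa [Real.norm_eq_abs, hμab, IntegrableOn] using h
  have hgp_nonneg : 0 ≤ ∫ t in Ioo a b, |g t| ^ p :=
    setIntegral_nonneg measurableSet_Ioo fun t _ => Real.rpow_nonneg (abs_nonneg _) p
  have hNeq : (∫ t in Ioo a b, |g t| ^ p) ^ (1/p) = N := by
    have h1 := hf.eLpNorm_eq_integral_rpow_norm (ENNReal.ofReal_pos.2 hp0).ne'
      ENNReal.ofReal_ne_top
    rw [ENNReal.toReal_ofReal hp0.le] at h1
    have h2 : ∫ t, ‖f t‖ ^ p ∂μab = ∫ t in Ioo a b, |g t| ^ p := by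
      rw [hμab]
      refine integral_congr_ae (hfg.mono fun t ht => ?_)
      simp only [Real.norm_eq_abs, ht]
    rw [h2] at h1
    rw [hN, h1, ENNReal.toReal_ofReal (Real.rpow_nonneg hgp_nonneg _), one_div]
  have hNsub : ∀ c d : ℝ, Ioo c d ⊆ Ioo a b →
      (∫ t in Ioo c d, |g t| ^ p) ^ (1/p) ≤ N := by
    intro c d hsub
    rw [← hNeq]
    refine Real.rpow_le_rpow
      (setIntegral_nonneg measurableSet_Ioo fun t _ => Real.rpow_nonneg (abs_nonneg _) p)
      ?_ (by positivity)
    exact setIntegral_mono_set hint_gp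
      (ae_of_all _ fun t => Real.rpow_nonneg (abs_nonneg _) p)
      (HasSubset.Subset.eventuallyLE hsub)
  have hrestrict : ∀ c d : ℝ, Ioo c d ⊆ Ioo a b →
      MemLp g (ENNReal.ofReal p) (volume.restrict (Ioo c d)) := by
    intro c d hsub
    exact hg.mono_measure (Measure.restrict_mono hsub le_rfl)
  -- the key estimate
  have key : ∀ x y, x ∈ Icc a b → y ∈ Icc a b → x ≤ y →
      |fracIntL a α g y - fracIntL a α g x| ≤
        (2 * (1 / Real.Gamma α) * (1/((α - 1) * q + 1)) ^ (1/q)) * N * (y - x) ^ (α - 1/p) := by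
    intro x y hx hy hxy
    have hax : a ≤ x := hx.1
    have hxb : x ≤ b := hx.2
    have hyb : y ≤ b := hy.2
    have hsub1 : Ioo a x ⊆ Ioo a b := Ioo_subset_Ioo le_rfl hxb
    have hsub2 : Ioo x y ⊆ Ioo a b := Ioo_subset_Ioo hax hyb
    have hr0 : α - 1 ≤ 0 := by linarith
    have hK2 : MemLp (fun t => (y - t) ^ (α-1)) (ENNReal.ofReal q) (volume.restrict (Ioo x y)) :=
      aux_kernel_memLp hq1 hs hxy le_rfl
    have hKx : MemLp (fun t => (x - t) ^ (α-1)) (ENNReal.ofReal q) (volume.restrict (Ioo a x)) :=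
      aux_kernel_memLp hq1 hs hax le_rfl
    have hKy : MemLp (fun t => (y - t) ^ (α-1)) (ENNReal.ofReal q) (volume.restrict (Ioo a x)) :=
      aux_kernel_memLp hq1 hs hax hxy
    have hK1 : MemLp (fun t => (x - t) ^ (α-1) - (y - t) ^ (α-1)) (ENNReal.ofReal q)
        (volume.restrict (Ioo a x)) := hKx.sub hKy
    have hg1 := hrestrict a x hsub1
    have hg2 := hrestrict x y hsub2
    have hI1 : IntervalIntegrable (fun t => (x - t) ^ (α-1) * g t) volume a x :=
      aux_prod_intervalIntegrable hqp hax hKx hg1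
    have hI2 : IntervalIntegrable (fun t => (y - t) ^ (α-1) * g t) volume a x :=
      aux_prod_intervalIntegrable hqp hax hKy hg1
    have hI3 : IntervalIntegrable (fun t => (y - t) ^ (α-1) * g t) volume x y :=
      aux_prod_intervalIntegrable hqp hxy hK2 hg2
    have hsplit : (∫ t in a..y, (y - t) ^ (α-1) * g t)
        = (∫ t in a..x, (y - t) ^ (α-1) * g t) + ∫ t in x..y, (y - t) ^ (α-1) * g t :=
      (intervalIntegral.integral_add_adjacent_intervals hI2 hI3).symm
    have hsub' : (∫ t in a..x, ((x - t) ^ (α-1) - (y - t) ^ (α-1)) * g t)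
        = (∫ t in a..x, (x - t) ^ (α-1) * g t) - ∫ t in a..x, (y - t) ^ (α-1) * g t := by
      rw [← intervalIntegral.integral_sub hI1 hI2]
      congr 1
      ext t
      ring
    have hdiff : fracIntL a α g y - fracIntL a α g x
        = (1/Real.Gamma α) * ((∫ t in x..y, (y - t) ^ (α-1) * g t)
            - ∫ t in a..x, ((x - t) ^ (α-1) - (y - t) ^ (α-1)) * g t) := by
      unfold fracIntL
      rw [hsplit, hsub']
      ring
    -- bound on middle integral
    have hKnn2 : ∀ t ∈ Ioo x y, (0:ℝ) ≤ (y - t) ^ (α-1) :=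
      fun t ht => Real.rpow_nonneg (by linarith [ht.2]) _
    have hM2 : ∫ t in Ioo x y, ((y - t) ^ (α-1)) ^ q ≤ (y - x) ^ ((α-1)*q+1) / ((α-1)*q+1) := by
      have e1 : ∫ t in Ioo x y, ((y - t) ^ (α-1)) ^ q = ∫ t in Ioo x y, (y - t) ^ ((α-1)*q) :=
        setIntegral_congr_fun measurableSet_Ioo fun t ht => by
          rw [← Real.rpow_mul (by linarith [ht.2] : (0:ℝ) ≤ y - t)]
      rw [e1, aux_kernel_integralOn hs hxy, sub_self, Real.zero_rpow hβpos.ne', sub_zero]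
    have hJ2 : |∫ t in x..y, (y - t) ^ (α-1) * g t|
        ≤ ((y - x) ^ ((α-1)*q+1) / ((α-1)*q+1)) ^ (1/q) * N :=
      aux_holder_bound hqp hxy hK2 hg2 hKnn2 hM2 (hNsub x y hsub2)
    -- bound on the first integral
    have hKnn1 : ∀ t ∈ Ioo a x, (0:ℝ) ≤ (x - t) ^ (α-1) - (y - t) ^ (α-1) := by
      intro t ht
      have h1 : (0:ℝ) < x - t := by linarith [ht.2]
      exact sub_nonneg.2 (Real.rpow_le_rpow_of_nonpos h1 (by linarith) hr0)
    have hIx : IntegrableOn (fun t => (x - t) ^ ((α-1)*q)) (Ioo a x) volume :=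
      aux_kernel_integrableOn hs hax
    have hIy : IntegrableOn (fun t => (y - t) ^ ((α-1)*q)) (Ioo a x) volume :=
      aux_kernel_integrableOn hs hax
    have hK1int : IntegrableOn (fun t => ((x - t) ^ (α-1) - (y - t) ^ (α-1)) ^ q)
        (Ioo a x) volume := by
      have h := hK1.integrable_norm_rpow (ENNReal.ofReal_pos.2 hq0).ne' ENNReal.ofReal_ne_top
      rw [ENNReal.toReal_ofReal hq0.le] at h
      refine h.congr ((ae_restrict_iff' measurableSet_Ioo).2 (ae_of_all _ fun t ht => ?_))
      simp only [Real.norm_eq_abs]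
      rw [abs_of_nonneg (hKnn1 t ht)]
    have hM1 : ∫ t in Ioo a x, ((x - t) ^ (α-1) - (y - t) ^ (α-1)) ^ q
        ≤ (y - x) ^ ((α-1)*q+1) / ((α-1)*q+1) := by
      have step1 : ∫ t in Ioo a x, ((x - t) ^ (α-1) - (y - t) ^ (α-1)) ^ q
          ≤ ∫ t in Ioo a x, ((x - t) ^ ((α-1)*q) - (y - t) ^ ((α-1)*q)) := by
        refine setIntegral_mono_on hK1int (hIx.sub hIy) measurableSet_Ioo fun t ht => ?_
        have h1 : (0:ℝ) < x - t := by linarith [ht.2]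
        have h2 : (0:ℝ) ≤ y - t := by linarith [ht.2]
        have hup := aux_rpow_superadd (hKnn1 t ht) (Real.rpow_nonneg h2 (α-1)) hq1
        rw [sub_add_cancel] at hup
        have e1 : ((x - t) ^ (α-1)) ^ q = (x - t) ^ ((α-1)*q) :=
          (Real.rpow_mul h1.le _ _).symm
        have e2 : ((y - t) ^ (α-1)) ^ q = (y - t) ^ ((α-1)*q) :=
          (Real.rpow_mul h2 _ _).symm
        rw [e1, e2] at hup
        linarith
      have step2 : ∫ t in Ioo a x, ((x - t) ^ ((α-1)*q) - (y - t) ^ ((α-1)*q))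
          = ((x - a) ^ ((α-1)*q+1) - (0:ℝ) ^ ((α-1)*q+1)) / ((α-1)*q+1)
            - ((y - a) ^ ((α-1)*q+1) - (y - x) ^ ((α-1)*q+1)) / ((α-1)*q+1) := by
        rw [integral_sub hIx hIy, aux_kernel_integralOn hs hax, aux_kernel_integralOn hs hax,
          sub_self]
      have h3 : (x - a) ^ ((α-1)*q+1) ≤ (y - a) ^ ((α-1)*q+1) :=
        Real.rpow_le_rpow (by linarith) (by linarith) hβpos.le
      rw [Real.zero_rpow hβpos.ne'] at step2
      calc ∫ t in Ioo a x, ((x - t) ^ (α-1) - (y - t) ^ (α-1)) ^ q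
          ≤ ∫ t in Ioo a x, ((x - t) ^ ((α-1)*q) - (y - t) ^ ((α-1)*q)) := step1
        _ ≤ (y - x) ^ ((α-1)*q+1) / ((α-1)*q+1) := by
            rw [step2]
            rw [div_sub_div_same, div_le_div_iff₀ hβpos hβpos]
            nlinarith [hβpos]
    have hJ1 : |∫ t in a..x, ((x - t) ^ (α-1) - (y - t) ^ (α-1)) * g t|
        ≤ ((y - x) ^ ((α-1)*q+1) / ((α-1)*q+1)) ^ (1/q) * N :=
      aux_holder_bound hqp hax hK1 hg1 hKnn1 hM1 (hNsub a x hsub1)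
    -- assemble
    have hMq : ((y - x) ^ ((α-1)*q+1) / ((α-1)*q+1)) ^ (1/q)
        = (1/((α-1)*q+1)) ^ (1/q) * (y - x) ^ (α - 1/p) := by
      rw [div_eq_mul_one_div, Real.mul_rpow (Real.rpow_nonneg (by linarith) _) (by positivity),
        ← Real.rpow_mul (by linarith : (0:ℝ) ≤ y - x), hβq, mul_comm]
    have hN0 : 0 ≤ N := ENNReal.toReal_nonneg
    rw [hdiff, abs_mul, abs_of_nonneg (by positivity : (0:ℝ) ≤ 1/Real.Gamma α)]
    have htri := abs_sub (∫ t in x..y, (y - t) ^ (α-1) * g t)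
      (∫ t in a..x, ((x - t) ^ (α-1) - (y - t) ^ (α-1)) * g t)
    rw [hMq] at hJ1 hJ2
    have hΓ' : 0 ≤ 1/Real.Gamma α := by positivity
    calc (1/Real.Gamma α) * |(∫ t in x..y, (y - t) ^ (α-1) * g t)
            - ∫ t in a..x, ((x - t) ^ (α-1) - (y - t) ^ (α-1)) * g t|
        ≤ (1/Real.Gamma α) * (|∫ t in x..y, (y - t) ^ (α-1) * g t|
            + |∫ t in a..x, ((x - t) ^ (α-1) - (y - t) ^ (α-1)) * g t|) :=
          mul_le_mul_of_nonneg_left htri hΓ'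
      _ ≤ (1/Real.Gamma α) * ((1/((α-1)*q+1)) ^ (1/q) * (y - x) ^ (α - 1/p) * N
            + (1/((α-1)*q+1)) ^ (1/q) * (y - x) ^ (α - 1/p) * N) :=
          mul_le_mul_of_nonneg_left (add_le_add hJ2 hJ1) hΓ'
      _ = 2 * (1 / Real.Gamma α) * (1/((α - 1) * q + 1)) ^ (1/q) * N * (y - x) ^ (α - 1/p) := by
          ring
  -- conclude
  refine ⟨fracIntL a α g, ?_, ?_⟩
  · filter_upwards [ae_restrict_mem measurableSet_Ioo] with x hx
    exact heqx x (Ioo_subset_Icc_self hx)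
  · intro x hx y hy
    rcases le_total x y with h | h
    · have hxy' : |x - y| = y - x := by
        rw [abs_sub_comm]; exact abs_of_nonneg (sub_nonneg.2 h)
      rw [abs_sub_comm, hxy']
      exact key x y hx hy h
    · have hxy' : |x - y| = x - y := abs_of_nonneg (sub_nonneg.2 h)
      rw [hxy']
      exact key y x hy hx h
end

section
/- (Bihari's inequality) Let κ : [0,∞) → [0,∞) be continuous and non-decreasing with κ(u)>0 for u>0, and define G(v) = ∫_1^v ds/κ(s) for v>0 (so G is strictly increasing with inverse G⁻¹ on its range). Let T>0, C ≥ 0, ε₁ > 0, and let Z : [0,T] → [0,∞) be continuous with Z(t) ≤ ε₁ + C ∫_0^t κ(Z(s)) ds for all t ∈ [0,T]. If G(ε₁) + C T < lim_{v→∞} G(v), then Z(t) ≤ G⁻¹( G(ε₁) + C t ) for all t ∈ [0,T]. -/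
open Set MeasureTheory intervalIntegral

/-- Bihari's inequality. Let `κ : [0,∞) → [0,∞)` be continuous and non-decreasing with
`κ(u) > 0` for `u > 0`, and let `G(v) = ∫_1^v ds/κ(s)` for `v > 0`.  If `Z : [0,T] → [0,∞)`
is continuous with `Z(t) ≤ ε₁ + C ∫_0^t κ(Z(s)) ds` on `[0,T]` and
`G(ε₁) + C T < lim_{v→∞} G(v)` (i.e. `G(ε₁) + C T` is below some value of `G`), then
`Z(t) ≤ G⁻¹(G(ε₁) + C t)` for all `t ∈ [0,T]`, where `G⁻¹` is the inverse of `G` on `(0,∞)`. -/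
theorem bihari_inequality
    (κ : ℝ → ℝ)
    (hcont : ContinuousOn κ (Ici 0))
    (hmono : MonotoneOn κ (Ici 0))
    (hnonneg : ∀ u : ℝ, 0 ≤ u → 0 ≤ κ u)
    (hpos : ∀ u : ℝ, 0 < u → 0 < κ u)
    (G : ℝ → ℝ) (hG : ∀ v : ℝ, 0 < v → G v = ∫ s in (1:ℝ)..v, 1 / κ s)
    (T C ε₁ : ℝ) (hT : 0 < T) (hC : 0 ≤ C) (hε : 0 < ε₁)
    (Z : ℝ → ℝ)
    (hZcont : ContinuousOn Z (Icc 0 T))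
    (hZnonneg : ∀ t ∈ Icc (0:ℝ) T, 0 ≤ Z t)
    (hZ : ∀ t ∈ Icc (0:ℝ) T, Z t ≤ ε₁ + C * ∫ s in (0:ℝ)..t, κ (Z s))
    (hlim : ∃ v : ℝ, 0 < v ∧ G ε₁ + C * T < G v) :
    ∀ t ∈ Icc (0:ℝ) T, Z t ≤ Function.invFunOn G (Ioi 0) (G ε₁ + C * t) := by
  -- continuity of 1/κ on (0,∞)
  have hκcontIoi : ContinuousOn κ (Ioi 0) := hcont.mono Ioi_subset_Ici_self
  have hinvcont : ContinuousOn (fun s => 1 / κ s) (Ioi 0) :=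
    continuousOn_const.div hκcontIoi (fun x hx => (hpos x hx).ne')
  -- interval integrability of 1/κ on subintervals of (0,∞)
  have hint : ∀ a b : ℝ, 0 < a → 0 < b →
      IntervalIntegrable (fun s => 1 / κ s) volume a b := by
    intro a b ha hb
    apply ContinuousOn.intervalIntegrable
    apply hinvcont.mono
    intro x hx
    exact lt_of_lt_of_le (lt_min ha hb) hx.1
  -- derivative of G on (0,∞)
  have hGderiv : ∀ w : ℝ, 0 < w → HasDerivAt G (1 / κ w) w := by
    intro w hw
    have h1 : HasDerivAt (fun v => ∫ s in (1:ℝ)..v, 1 / κ s) (1 / κ w) w := by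
      refine intervalIntegral.integral_hasDerivAt_right (hint 1 w one_pos hw) ?_ ?_
      · exact ⟨Ioi 0, isOpen_Ioi.mem_nhds hw,
          (hinvcont.aestronglyMeasurable measurableSet_Ioi)⟩
      · exact hinvcont.continuousAt (isOpen_Ioi.mem_nhds hw)
    apply h1.congr_of_eventuallyEq
    filter_upwards [isOpen_Ioi.mem_nhds hw] with v hv
    exact hG v hv
  -- strict monotonicity of G on (0,∞)
  have hGmono : StrictMonoOn G (Ioi 0) := by
    intro a ha b hb hab
    have hadd : (∫ s in (1:ℝ)..a, 1 / κ s) + ∫ s in a..b, 1 / κ s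
        = ∫ s in (1:ℝ)..b, 1 / κ s :=
      intervalIntegral.integral_add_adjacent_intervals (hint 1 a one_pos ha)
        (hint a b ha hb)
    have hpos' : 0 < ∫ s in a..b, 1 / κ s := by
      refine intervalIntegral.intervalIntegral_pos_of_pos_on (hint a b ha hb) ?_ hab
      intro x hx
      exact one_div_pos.mpr (hpos x (ha.trans hx.1))
    rw [hG a ha, hG b hb]
    linarith
  -- the function f s = κ (Z s)
  set f : ℝ → ℝ := fun s => κ (Z s) with hf_def
  have hfcont : ContinuousOn f (Icc 0 T) :=
    hcont.comp hZcont (fun s hs => hZnonneg s hs)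
  have hfint : IntegrableOn f (Icc 0 T) :=
    hfcont.integrableOn_compact isCompact_Icc
  -- the majorant W
  set W : ℝ → ℝ := fun t => ε₁ + C * ∫ s in (0:ℝ)..t, f s with hW_def
  have hW0 : W 0 = ε₁ := by simp [hW_def]
  have hWge : ∀ t ∈ Icc (0:ℝ) T, ε₁ ≤ W t := by
    intro t ht
    have h0 : 0 ≤ ∫ s in (0:ℝ)..t, f s := by
      apply intervalIntegral.integral_nonneg ht.1
      intro s hs
      exact hnonneg _ (hZnonneg s ⟨hs.1, hs.2.trans ht.2⟩)
    have : 0 ≤ C * ∫ s in (0:ℝ)..t, f s := mul_nonneg hC h0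
    simp only [hW_def]; linarith
  have hWpos : ∀ t ∈ Icc (0:ℝ) T, 0 < W t := fun t ht => lt_of_lt_of_le hε (hWge t ht)
  have hZleW : ∀ t ∈ Icc (0:ℝ) T, Z t ≤ W t := fun t ht => hZ t ht
  -- continuity of W on [0,T]
  have hWcont : ContinuousOn W (Icc 0 T) := by
    have h1 : ContinuousOn (fun t => ∫ s in (0:ℝ)..t, f s) (Icc 0 T) := by
      have := intervalIntegral.continuousOn_primitive_interval (a := 0) (b := T)
        (f := f) (μ := volume) (by rwa [uIcc_of_le hT.le])
      rwa [uIcc_of_le hT.le] at this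
    exact continuousOn_const.add (continuousOn_const.mul h1)
  -- derivative of W at interior points
  have hWderiv : ∀ t ∈ Ioo (0:ℝ) T, HasDerivAt W (C * f t) t := by
    intro t ht
    have htIcc : Icc (0:ℝ) T ∈ nhds t := Icc_mem_nhds ht.1 ht.2
    have hP : HasDerivAt (fun u => ∫ s in (0:ℝ)..u, f s) (f t) t := by
      refine intervalIntegral.integral_hasDerivAt_right ?_ ?_ ?_
      · apply ContinuousOn.intervalIntegrable
        apply hfcont.mono
        intro x hx
        rcases le_total 0 t with h | h
        · rw [uIcc_of_le h] at hx; exact ⟨hx.1, hx.2.trans ht.2.le⟩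
        · exact absurd ht.1 (not_lt.mpr h)
      · exact ⟨Icc 0 T, htIcc, hfcont.aestronglyMeasurable measurableSet_Icc⟩
      · exact hfcont.continuousAt htIcc
    simpa [hW_def] using (hP.const_mul C).const_add ε₁
  -- the auxiliary function g
  set g : ℝ → ℝ := fun t => G (W t) - C * t with hg_def
  have hGcontIoi : ContinuousOn G (Ioi 0) := fun w hw =>
    (hGderiv w hw).continuousAt.continuousWithinAt
  have hgcont : ContinuousOn g (Icc 0 T) := by
    apply ContinuousOn.sub
    · exact hGcontIoi.comp hWcont (fun t ht => hWpos t ht)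
    · exact (continuous_const.mul continuous_id).continuousOn
  have hgderiv : ∀ t ∈ Ioo (0:ℝ) T, HasDerivAt g (1 / κ (W t) * (C * f t) - C) t := by
    intro t ht
    have h1 : HasDerivAt (fun u => G (W u)) (1 / κ (W t) * (C * f t)) t :=
      (hGderiv (W t) (hWpos t (Ioo_subset_Icc_self ht))).comp t (hWderiv t ht)
    simpa [hg_def, Pi.sub_def] using h1.sub ((hasDerivAt_id t).const_mul C)
  have hgderiv_nonpos : ∀ t ∈ Ioo (0:ℝ) T, 1 / κ (W t) * (C * f t) - C ≤ 0 := by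
    intro t ht
    have htIcc := Ioo_subset_Icc_self ht
    have hZt : (0:ℝ) ≤ Z t := hZnonneg t htIcc
    have hκW : 0 < κ (W t) := hpos _ (hWpos t htIcc)
    have hκle : κ (Z t) ≤ κ (W t) :=
      hmono hZt (le_of_lt (hWpos t htIcc)) (hZleW t htIcc)
    have hκZ : 0 ≤ κ (Z t) := hnonneg _ hZt
    rw [one_div, sub_nonpos, inv_mul_le_iff₀ hκW]
    calc C * f t = C * κ (Z t) := rfl
    _ ≤ C * κ (W t) := mul_le_mul_of_nonneg_left hκle hC
    _ = κ (W t) * C := mul_comm _ _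
  -- g is antitone on [0,T]
  have hganti : AntitoneOn g (Icc 0 T) := by
    apply antitoneOn_of_deriv_nonpos (convex_Icc 0 T) hgcont
    · intro t ht
      rw [interior_Icc] at ht
      exact (hgderiv t ht).differentiableAt.differentiableWithinAt
    · intro t ht
      rw [interior_Icc] at ht
      rw [(hgderiv t ht).deriv]
      exact hgderiv_nonpos t ht
  -- hence G (W t) ≤ G ε₁ + C t on [0,T]
  have hkey : ∀ t ∈ Icc (0:ℝ) T, G (W t) ≤ G ε₁ + C * t := by
    intro t ht
    have h0 : (0:ℝ) ∈ Icc (0:ℝ) T := ⟨le_rfl, hT.le⟩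
    have := hganti h0 ht ht.1
    simp only [hg_def, hW0, mul_zero, sub_zero] at this
    linarith
  -- final argument
  obtain ⟨v, hv, hvlt⟩ := hlim
  intro t ht
  have hCt : 0 ≤ C * t := mul_nonneg hC ht.1
  have hCtT : C * t ≤ C * T := mul_le_mul_of_nonneg_left ht.2 hC
  have hylt : G ε₁ + C * t < G v := lt_of_le_of_lt (by linarith) hvlt
  have hyge : G ε₁ ≤ G ε₁ + C * t := by linarith
  have hεv : ε₁ < v := by
    by_contra h
    push_neg at h
    have : G v ≤ G ε₁ := by
      rcases eq_or_lt_of_le h with h' | h'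
      · rw [h']
      · exact (hGmono hv hε h').le
    linarith
  obtain ⟨u, huIcc, hGu⟩ := intermediate_value_Icc hεv.le
    (hGcontIoi.mono (fun x hx => lt_of_lt_of_le hε hx.1)) ⟨hyge, hylt.le⟩
  have hu : u ∈ Ioi (0:ℝ) := lt_of_lt_of_le hε huIcc.1
  have hex : ∃ x ∈ Ioi (0:ℝ), G x = G ε₁ + C * t := ⟨u, hu, hGu⟩
  have hinv_mem : Function.invFunOn G (Ioi 0) (G ε₁ + C * t) ∈ Ioi (0:ℝ) :=
    Function.invFunOn_mem hex
  have hinv_eq : G (Function.invFunOn G (Ioi 0) (G ε₁ + C * t)) = G ε₁ + C * t :=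
    Function.invFunOn_eq hex
  have hinv_u : Function.invFunOn G (Ioi 0) (G ε₁ + C * t) = u :=
    hGmono.injOn hinv_mem hu (by rw [hinv_eq, hGu])
  rw [hinv_u]
  have hWleu : W t ≤ u := by
    by_contra h
    push_neg at h
    have := hGmono hu (hWpos t ht) h
    have h2 := hkey t ht
    rw [hGu] at this
    linarith
  exact (hZleW t ht).trans hWleu
end
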